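/- Let χ be a non-principal quadratic Dirichlet character modulo q, and let x ≥ 1. If no prime p ≤ x satisfies χ(p) = 1, then ∑_{n ≤ x} (1 ⋆ χ)(n) ≤ √x · ∏_{p | q} (1 − 1/√p)^{-1}. -/

import Mathlib

open ArithmeticFunction Finset in
theorem stmt_10 (q : ℕ) (hq : 2 ≤ q) (χ : DirichletCharacter ℝ q) (hχ : χ ≠ 1)
    (hquad : ∀ n : ℕ, χ n = -1 ∨ χ n = 0 ∨ χ n = 1)
    (x : ℝ) (hx : 1 ≤ x)
    (hnop : ∀ p : ℕ, p.Prime → (p : ℝ) ≤ x → χ p ≠ 1) :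
    ∑ n ∈ Finset.Icc 1 ⌊x⌋₊, ∑ d ∈ n.divisors, χ d ≤
      Real.sqrt x * ∏ p ∈ q.primeFactors, (1 - 1 / Real.sqrt p)⁻¹ := by
  classical
  have hx0 : (0:ℝ) ≤ x := by linarith
  set N := ⌊x⌋₊ with hNdef
  have hNx : (N : ℝ) ≤ x := Nat.floor_le hx0
  -- the arithmetic function F = ζ * χ
  set F : ArithmeticFunction ℝ :=
    ((zeta : ArithmeticFunction ℕ) : ArithmeticFunction ℝ) * toArithmeticFunction (χ ·) with hF
  have hFmult : F.IsMultiplicative :=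
    isMultiplicative_zeta.natCast.mul <| DirichletCharacter.isMultiplicative_toArithmeticFunction χ
  have hFapply : ∀ n : ℕ, F n = ∑ d ∈ n.divisors, χ d := by
    intro n
    rw [hF, coe_zeta_mul_apply]
    exact Finset.sum_congr rfl fun d hd =>
      (χ.apply_eq_toArithmeticFunction_apply (Nat.pos_of_mem_divisors hd).ne').symm
  have hFpp : ∀ {p : ℕ}, p.Prime → ∀ k : ℕ, F (p ^ k) = ∑ i ∈ Finset.range (k+1), (χ p)^i := by
    intro p hp k
    rw [hFapply, Nat.sum_divisors_prime_pow hp]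
    exact Finset.sum_congr rfl fun i _ => by rw [Nat.cast_pow, map_pow]
  have hchi0 : ∀ {p : ℕ}, p.Prime → ¬ p ∣ q → χ p ≠ 0 := by
    intro p hp hpq
    have hu : IsUnit ((p : ℕ) : ZMod q) := (ZMod.isUnit_prime_iff_not_dvd hp).mpr hpq
    exact (hu.map χ).ne_zero
  have hval01 : ∀ {p : ℕ}, p.Prime → (p:ℝ) ≤ x → ∀ k : ℕ, F (p^k) = 0 ∨ F (p^k) = 1 := by
    intro p hp hpx k
    rcases hquad p with h | h | h
    · rw [hFpp hp k, h, neg_one_geom_sum]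
      split_ifs
      · exact Or.inl rfl
      · exact Or.inr rfl
    · right
      rw [hFpp hp k, h, Finset.sum_range_succ']
      simp
    · exact absurd h (hnop p hp hpx)
  have hval0 : ∀ {p : ℕ}, p.Prime → (p:ℝ) ≤ x → ¬ p ∣ q → ∀ k : ℕ, ¬ Even k →
      F (p^k) = 0 := by
    intro p hp hpx hpq k hk
    rcases hquad p with h | h | h
    · rw [hFpp hp k, h, neg_one_geom_sum, if_pos (Nat.even_add_one.mpr hk)]
    · exact absurd h (hchi0 hp hpq)
    · exact absurd h (hnop p hp hpx)
  -- pointwise bound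
  have hGoodbound : ∀ n ∈ Finset.Icc 1 N, (∑ d ∈ n.divisors, χ d) ≤
      if (∀ p ∈ n.primeFactors, ¬ p ∣ q → Even (n.factorization p)) then (1:ℝ) else 0 := by
    intro n hn
    obtain ⟨hn1, hnN⟩ := Finset.mem_Icc.mp hn
    have hn0 : n ≠ 0 := by omega
    have hpx : ∀ p ∈ n.primeFactors, (p:ℝ) ≤ x := by
      intro p hp
      have h1 : p ≤ n := Nat.le_of_dvd (by omega) (Nat.dvd_of_mem_primeFactors hp)
      have h2 : (n:ℝ) ≤ x := le_trans (by exact_mod_cast hnN) hNx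
      exact le_trans (by exact_mod_cast h1) h2
    rw [← hFapply, hFmult.multiplicative_factorization F hn0,
      Nat.prod_factorization_eq_prod_primeFactors]
    split_ifs with hgood
    · refine Finset.prod_le_one (fun p hp => ?_) (fun p hp => ?_)
      · rcases hval01 (Nat.prime_of_mem_primeFactors hp) (hpx p hp) (n.factorization p) with h | h
          <;> rw [h] <;> norm_num
      · rcases hval01 (Nat.prime_of_mem_primeFactors hp) (hpx p hp) (n.factorization p) with h | h
          <;> rw [h] <;> norm_num
    · push_neg at hgood
      obtain ⟨p, hp, hpq, hodd⟩ := hgood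
      exact le_of_eq (Finset.prod_eq_zero hp
        (hval0 (Nat.prime_of_mem_primeFactors hp) (hpx p hp) hpq _ hodd))
  -- the good set and its parts
  set Good : ℕ → Prop := fun n => ∀ p ∈ n.primeFactors, ¬ p ∣ q → Even (n.factorization p)
    with hGoodDef
  set sq : ℕ → ℕ := fun n => ∏ p ∈ n.primeFactors with ¬ p ∣ q, p ^ (n.factorization p / 2)
    with hsq
  set dP : ℕ → ℕ := fun n => ∏ p ∈ n.primeFactors with p ∣ q, p ^ n.factorization p with hdP
  set G : Finset ℕ := (Finset.Icc 1 N).filter Good with hG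
  set D : Finset ℕ := (Finset.Icc 1 N).filter (fun d => ∀ p ∈ d.primeFactors, p ∣ q) with hD
  have hdecomp : ∀ n ∈ G, n = dP n * (sq n)^2 := by
    intro n hn
    obtain ⟨hn', hgood⟩ := Finset.mem_filter.mp hn
    have hn0 : n ≠ 0 := by
      have := (Finset.mem_Icc.mp hn').1; omega
    have h1 : ∏ p ∈ n.primeFactors with ¬ p ∣ q, p ^ n.factorization p = (sq n)^2 := by
      rw [hsq, ← Finset.prod_pow]
      refine Finset.prod_congr rfl fun p hp => ?_
      rw [← pow_mul]
      obtain ⟨hp1, hp2⟩ := Finset.mem_filter.mp hp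
      congr 1
      exact (Nat.div_mul_cancel (hgood p hp1 hp2).two_dvd).symm
    have h2 : ∏ p ∈ n.primeFactors, p ^ n.factorization p = n := by
      rw [← Nat.prod_factorization_eq_prod_primeFactors (fun p k => p ^ k)]
      exact Nat.factorization_prod_pow_eq_self hn0
    calc n = ∏ p ∈ n.primeFactors, p ^ n.factorization p := h2.symm
      _ = (∏ p ∈ n.primeFactors with p ∣ q, p ^ n.factorization p) *
          ∏ p ∈ n.primeFactors with ¬ p ∣ q, p ^ n.factorization p :=
        (Finset.prod_filter_mul_prod_filter_not _ _ _).symm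
      _ = dP n * (sq n)^2 := by rw [h1, hdP]
  have hdPmem : ∀ n ∈ G, dP n ∈ D := by
    intro n hn
    obtain ⟨hn', _⟩ := Finset.mem_filter.mp hn
    obtain ⟨hn1, hnN⟩ := Finset.mem_Icc.mp hn'
    have hdvd : dP n ∣ n := ⟨(sq n)^2, hdecomp n hn⟩
    have hpos : 0 < dP n := Nat.pos_of_dvd_of_pos hdvd (by omega)
    refine Finset.mem_filter.mpr ⟨Finset.mem_Icc.mpr
      ⟨hpos, le_trans (Nat.le_of_dvd (by omega) hdvd) hnN⟩, ?_⟩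
    intro p hp
    have hpp := Nat.prime_of_mem_primeFactors hp
    have hpdvd : p ∣ dP n := Nat.dvd_of_mem_primeFactors hp
    rw [hdP] at hpdvd
    obtain ⟨r, hr, hpr⟩ := hpp.prime.exists_mem_finset_dvd hpdvd
    obtain ⟨hr1, hr2⟩ := Finset.mem_filter.mp hr
    have : p = r :=
      ((Nat.prime_dvd_prime_iff_eq hpp (Nat.prime_of_mem_primeFactors hr1)).mp
        (hpp.dvd_of_dvd_pow hpr))
    exact this ▸ hr2
  have hfibercard : ∀ d ∈ D, (G.filter (fun n => dP n = d)).card ≤ Nat.sqrt (N / d) := by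
    intro d hd
    have hd1 : 1 ≤ d := (Finset.mem_Icc.mp (Finset.mem_filter.mp hd).1).1
    have hmaps : ∀ n ∈ G.filter (fun n => dP n = d), sq n ∈ Finset.Icc 1 (Nat.sqrt (N / d)) := by
      intro n hn
      obtain ⟨hnG, hndP⟩ := Finset.mem_filter.mp hn
      obtain ⟨hn', _⟩ := Finset.mem_filter.mp hnG
      obtain ⟨hn1, hnN⟩ := Finset.mem_Icc.mp hn'
      have hdec := hdecomp n hnG
      have hs0 : 0 < sq n := by
        rcases Nat.eq_zero_or_pos (sq n) with h | h
        · rw [h] at hdec; simp at hdec; omega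
        · exact h
      refine Finset.mem_Icc.mpr ⟨hs0, ?_⟩
      rw [Nat.le_sqrt]
      rw [Nat.le_div_iff_mul_le (by omega)]
      rw [hndP] at hdec
      have : sq n * sq n * d = n := by
        calc sq n * sq n * d = d * sq n ^ 2 := by ring
          _ = n := hdec.symm
      omega
    calc (G.filter (fun n => dP n = d)).card ≤ (Finset.Icc 1 (Nat.sqrt (N / d))).card := by
          refine Finset.card_le_card_of_injOn sq hmaps ?_
          intro a ha b hb hab
          obtain ⟨haG, hadP⟩ := Finset.mem_filter.mp ha
          obtain ⟨hbG, hbdP⟩ := Finset.mem_filter.mp hb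
          have := hdecomp a haG
          rw [this, hdecomp b hbG, hadP, hbdP, hab]
      _ = Nat.sqrt (N / d) := by rw [Nat.card_Icc]; omega
  have hfiberR : ∀ d ∈ D, ((G.filter (fun n => dP n = d)).card : ℝ) ≤
      Real.sqrt x * (Real.sqrt d)⁻¹ := by
    intro d hd
    have hd1 : 1 ≤ d := (Finset.mem_Icc.mp (Finset.mem_filter.mp hd).1).1
    have hd0 : (0:ℝ) < (d:ℝ) := by exact_mod_cast hd1
    have h1 : ((Nat.sqrt (N / d) : ℕ) : ℝ) ≤ Real.sqrt (x / d) := by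
      rw [Real.le_sqrt (Nat.cast_nonneg _) (by positivity)]
      have h2 : Nat.sqrt (N / d) ^ 2 ≤ N / d := Nat.sqrt_le' (N / d)
      have h3 : ((N / d : ℕ) : ℝ) ≤ (N : ℝ) / (d : ℝ) := Nat.cast_div_le
      calc ((Nat.sqrt (N / d) : ℕ) : ℝ)^2
          = ((Nat.sqrt (N / d) ^ 2 : ℕ) : ℝ) := by push_cast; ring
        _ ≤ ((N / d : ℕ) : ℝ) := by exact_mod_cast h2
        _ ≤ (N : ℝ) / (d : ℝ) := h3
        _ ≤ x / d := by gcongr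
    calc ((G.filter (fun n => dP n = d)).card : ℝ)
        ≤ ((Nat.sqrt (N / d) : ℕ) : ℝ) := by exact_mod_cast hfibercard d hd
      _ ≤ Real.sqrt (x / d) := h1
      _ = Real.sqrt x * (Real.sqrt d)⁻¹ := by rw [Real.sqrt_div hx0, div_eq_mul_inv]
  -- Euler product bound for the sum over D
  set f : ℕ →* ℝ :=
    { toFun := fun n => (Real.sqrt n)⁻¹,
      map_one' := by simp,
      map_mul' := fun m n => by
        push_cast
        rw [Real.sqrt_mul (Nat.cast_nonneg m), mul_inv] } with hfdef
  have hlt : ∀ {p : ℕ}, p.Prime → ‖f p‖ < 1 := by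
    intro p hp
    have h2 : (1:ℝ) < Real.sqrt p := by
      rw [show (1:ℝ) = Real.sqrt 1 from (Real.sqrt_one).symm]
      exact Real.sqrt_lt_sqrt (by norm_num) (by exact_mod_cast hp.one_lt)
    have hfp : f p = (Real.sqrt p)⁻¹ := rfl
    rw [hfp, Real.norm_eq_abs, abs_of_nonneg (by positivity)]
    exact inv_lt_one_of_one_lt₀ h2
  obtain ⟨-, hsum⟩ :=
    EulerProduct.summable_and_hasSum_factoredNumbers_prod_filter_prime_geometric
      (f := f) hlt q.primeFactors
  have hfilter : (q.primeFactors.filter (fun p => p.Prime)) = q.primeFactors :=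
    Finset.filter_true_of_mem fun p hp => Nat.prime_of_mem_primeFactors hp
  have hDsub : ∀ d ∈ D, d ∈ Nat.factoredNumbers q.primeFactors := by
    intro d hd
    obtain ⟨hd', hdq⟩ := Finset.mem_filter.mp hd
    have hd1 := (Finset.mem_Icc.mp hd').1
    rw [Nat.mem_factoredNumbers']
    intro p hp hpd
    exact Nat.mem_primeFactors.mpr
      ⟨hp, hdq p (Nat.mem_primeFactors.mpr ⟨hp, hpd, by omega⟩), by omega⟩
  have hDsum : ∑ d ∈ D, (Real.sqrt d)⁻¹ ≤ ∏ p ∈ q.primeFactors, (1 - 1 / Real.sqrt p)⁻¹ := by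
    set e : {d // d ∈ D} ↪ (Nat.factoredNumbers q.primeFactors) :=
      ⟨fun d => ⟨d.1, hDsub d.1 d.2⟩, fun a b hab => Subtype.ext (Subtype.mk_eq_mk.mp hab)⟩
      with hedef
    have h1 : ∑ d ∈ D, (Real.sqrt d)⁻¹ = ∑ m ∈ D.attach.map e, f m.1 := by
      rw [Finset.sum_map]
      exact (Finset.sum_attach D _).symm
    have h2 : ∑ m ∈ D.attach.map e, f m.1 ≤
        ∏ p ∈ q.primeFactors.filter (fun p => p.Prime), (1 - f p)⁻¹ :=
      sum_le_hasSum _ (fun m _ => inv_nonneg.mpr (Real.sqrt_nonneg _)) hsum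
    calc ∑ d ∈ D, (Real.sqrt d)⁻¹ = ∑ m ∈ D.attach.map e, f m.1 := h1
      _ ≤ ∏ p ∈ q.primeFactors.filter (fun p => p.Prime), (1 - f p)⁻¹ := h2
      _ = ∏ p ∈ q.primeFactors, (1 - 1 / Real.sqrt p)⁻¹ := by
          rw [hfilter]
          exact Finset.prod_congr rfl fun p _ => by rw [one_div]; rfl
  -- put everything together
  have hcard : G.card = ∑ d ∈ D, (G.filter (fun n => dP n = d)).card :=
    Finset.card_eq_sum_card_fiberwise hdPmem
  calc ∑ n ∈ Finset.Icc 1 N, ∑ d ∈ n.divisors, χ d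
      ≤ ∑ n ∈ Finset.Icc 1 N, (if Good n then (1:ℝ) else 0) := Finset.sum_le_sum hGoodbound
    _ = (G.card : ℝ) := by rw [Finset.sum_boole, hG]
    _ = ∑ d ∈ D, ((G.filter (fun n => dP n = d)).card : ℝ) := by
        rw [hcard]; push_cast; rfl
    _ ≤ ∑ d ∈ D, Real.sqrt x * (Real.sqrt d)⁻¹ := Finset.sum_le_sum hfiberR
    _ = Real.sqrt x * ∑ d ∈ D, (Real.sqrt d)⁻¹ := by rw [Finset.mul_sum]
    _ ≤ Real.sqrt x * ∏ p ∈ q.primeFactors, (1 - 1 / Real.sqrt p)⁻¹ :=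
        mul_le_mul_of_nonneg_left hDsum (Real.sqrt_nonneg x)
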